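/- (Strauss radial decay inequality in 2D) There exists C > 0 such that for every radially symmetric u ∈ H^1(ℝ²) and every x with |x| ≥ R > 0: |u(x)| ≤ C |x|^{−1/2} ‖u‖₂^{1/2} ‖∇u‖₂^{1/2}. -/

import Mathlib

open Set Metric MeasureTheory
open scoped ENNReal NNReal

noncomputable section
local notation "Fsp" => EuclideanSpace ℝ (Fin 2)

lemma aux_integral_eq (φ : ℝ → ℝ) :
    ∫ x : Fsp, φ ‖x‖ = (2 * (volume (ball (0:Fsp) 1)).toReal) * ∫ s in Ioi (0:ℝ), s * φ s := by
  have h := MeasureTheory.integral_fun_norm_addHaar (volume : Measure Fsp) φ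
  norm_num [finrank_euclideanSpace, smul_eq_mul, mul_assoc] at h
  rw [h, measureReal_def]; ring

lemma aux_integrableOn (φ : ℝ → ℝ) (hm : Measurable φ)
    (hint : Integrable (fun x : Fsp => φ ‖x‖)) :
    IntegrableOn (fun s => s * φ s) (Ioi (0:ℝ)) := by
  have hsc : MeasurableSet ({(0:Fsp)}ᶜ) := (measurableSet_singleton _).compl
  have emb := MeasurableEmbedding.subtype_coe hsc
  have h0 : Integrable (fun x : Fsp => φ ‖x‖)
      (Measure.map Subtype.val (volume.comap (Subtype.val : ({(0:Fsp)}ᶜ : Set Fsp) → Fsp))) := by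
    rw [emb.map_comap, Subtype.range_coe]
    exact hint.restrict
  have h1 : Integrable (fun x : ({(0:Fsp)}ᶜ : Set Fsp) => φ ‖(x : Fsp)‖) (volume.comap Subtype.val) :=
    emb.integrable_map_iff.mp h0
  have mp := (volume : Measure Fsp).measurePreserving_homeomorphUnitSphereProd
  rw [show Module.finrank ℝ Fsp - 1 = 1 by simp] at mp
  have h2 : Integrable (fun p : sphere (0:Fsp) 1 × Ioi (0:ℝ) => φ p.2)
      ((volume : Measure Fsp).toSphere.prod (Measure.volumeIoiPow 1)) := by
    rw [← mp.integrable_comp_emb (homeomorphUnitSphereProd Fsp).measurableEmbedding]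
    refine h1.congr (Filter.Eventually.of_forall fun p => ?_)
    simp [homeomorphUnitSphereProd, homeomorphSphereProd]
  -- toSphere is nonzero
  have hne : (volume : Measure Fsp).toSphere ≠ 0 := by
    intro h
    have := (volume : Measure Fsp).toSphere_apply_univ
    rw [h] at this
    simp only [Measure.coe_zero, Pi.zero_apply] at this
    have hpos := measure_ball_pos (volume : Measure Fsp) (0:Fsp) one_pos
    rcases mul_eq_zero.mp this.symm with h' | h'
    · norm_num [finrank_euclideanSpace] at h'
    · exact hpos.ne' h'
  have hmeas : AEStronglyMeasurable (fun p : sphere (0:Fsp) 1 × Ioi (0:ℝ) => φ p.2)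
      ((volume : Measure Fsp).toSphere.prod (Measure.volumeIoiPow 1)) :=
    (hm.comp (measurable_subtype_coe.comp measurable_snd)).aestronglyMeasurable
  have h3 := ((integrable_prod_iff hmeas).mp h2).1
  haveI : Filter.NeBot (ae ((volume : Measure Fsp).toSphere)) := ae_neBot.2 hne
  obtain ⟨x, hx⟩ := h3.exists
  -- hx : Integrable (fun y : Ioi 0 => φ y) (volumeIoiPow 1)
  rw [Measure.volumeIoiPow] at hx
  rw [integrable_withDensity_iff] at hx
  rotate_left
  · exact (measurable_subtype_coe.pow_const 1).ennreal_ofReal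
  · exact Filter.Eventually.of_forall fun r => ENNReal.ofReal_lt_top
  have h5 : Integrable (fun r : (Ioi (0:ℝ)) => r.1 * φ r.1) (volume.comap Subtype.val) := by
    refine hx.congr (Filter.Eventually.of_forall fun r => ?_)
    simp [pow_one, ENNReal.toReal_ofReal r.2.out.le, mul_comm]
  have emb2 := MeasurableEmbedding.subtype_coe (measurableSet_Ioi (a := (0:ℝ)))
  have : Integrable (fun s : ℝ => s * φ s)
      (Measure.map Subtype.val (volume.comap (Subtype.val : (Ioi (0:ℝ)) → ℝ))) :=
    emb2.integrable_map_iff.mpr h5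
  rwa [emb2.map_comap, Subtype.range_coe] at this

lemma aux_deriv_radial (u : Fsp → ℝ) (u' : Fsp → Fsp →L[ℝ] ℝ)
    (hrad : ∀ x y : Fsp, ‖x‖ = ‖y‖ → u x = u y)
    (hder : ∀ x, HasFDerivAt u (u' x) x) :
    ∀ x y : Fsp, ‖x‖ = ‖y‖ → ‖u' x‖ = ‖u' y‖ := by
  intro x y h
  set Q : Fsp ≃ₗᵢ[ℝ] Fsp := Submodule.reflection (ℝ ∙ (x - y))ᗮ with hQ
  have hQx : Q x = y := Submodule.reflection_sub h
  have hcomp : ∀ z, u (Q z) = u z := fun z => hrad _ _ (Q.norm_map z)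
  have hQder : HasFDerivAt (fun z => Q z) (Q.toContinuousLinearEquiv : Fsp →L[ℝ] Fsp) x :=
    (Q.toContinuousLinearEquiv : Fsp →L[ℝ] Fsp).hasFDerivAt
  have hchain : HasFDerivAt (fun z => u (Q z))
      ((u' y).comp (Q.toContinuousLinearEquiv : Fsp →L[ℝ] Fsp)) x := by
    have := (hder (Q x)).comp x hQder
    rwa [hQx] at this
  have heq : HasFDerivAt u ((u' y).comp (Q.toContinuousLinearEquiv : Fsp →L[ℝ] Fsp)) x := by
    have : (fun z => u (Q z)) = u := funext hcomp
    rwa [this] at hchain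
  have huniq : u' x = (u' y).comp (Q.toContinuousLinearEquiv : Fsp →L[ℝ] Fsp) :=
    (hder x).unique heq
  rw [huniq]
  exact ContinuousLinearMap.opNorm_comp_linearIsometryEquiv (u' y) Q

lemma aux_oneD (f f' g : ℝ → ℝ) (hf' : ∀ s, HasDerivAt f (f' s) s)
    (hmf' : Measurable f') (hmg : Measurable g)
    (hfg : ∀ s, |f' s| ≤ g s)
    (hAint : IntegrableOn (fun s => s * f s ^ 2) (Ioi (0:ℝ)))
    (hgint : IntegrableOn (fun s => s * g s ^ 2) (Ioi (0:ℝ))) :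
    ∀ r : ℝ, 0 < r → f r ^ 2 ≤ (2 / r) * Real.sqrt (∫ s in Ioi (0:ℝ), s * f s ^ 2)
      * Real.sqrt (∫ s in Ioi (0:ℝ), s * g s ^ 2) := by
  intro r hr
  have hcf : Continuous f := by
    rw [continuous_iff_continuousAt]; exact fun s => (hf' s).continuousAt
  have hmf : Measurable f := hcf.measurable
  -- integrability of s f'^2 on Ioi 0
  have hBint : IntegrableOn (fun s => s * f' s ^ 2) (Ioi (0:ℝ)) := by
    refine hgint.mono' ?_ ?_
    · exact ((measurable_id.mul (hmf'.pow_const 2))).aestronglyMeasurable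
    · filter_upwards [ae_restrict_mem measurableSet_Ioi] with s hs
      have h1 : f' s ^ 2 ≤ g s ^ 2 := by
        have := hfg s
        nlinarith [abs_nonneg (f' s), sq_abs (f' s)]
      have : s * f' s ^ 2 ≤ s * g s ^ 2 := by
        apply mul_le_mul_of_nonneg_left h1 (le_of_lt hs)
      rw [Real.norm_eq_abs, abs_of_nonneg (mul_nonneg (le_of_lt hs) (sq_nonneg _))]
      exact this
  -- MemLp of a := √s f, b := √s f' on restrict (Ioi r)
  set μr := volume.restrict (Ioi r) with hμr
  have hsub : Ioi r ⊆ Ioi (0:ℝ) := Ioi_subset_Ioi hr.le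
  have ha2 : Integrable (fun s => (Real.sqrt s * f s) ^ 2) μr := by
    refine (hAint.mono_set hsub).congr ?_
    filter_upwards [ae_restrict_mem measurableSet_Ioi] with s hs
    rw [mul_pow, Real.sq_sqrt (le_of_lt (hr.trans hs))]
  have hb2 : Integrable (fun s => (Real.sqrt s * f' s) ^ 2) μr := by
    refine (hBint.mono_set hsub).congr ?_
    filter_upwards [ae_restrict_mem measurableSet_Ioi] with s hs
    rw [mul_pow, Real.sq_sqrt (le_of_lt (hr.trans hs))]
  have hma : AEStronglyMeasurable (fun s => Real.sqrt s * f s) μr :=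
    (Real.continuous_sqrt.measurable.mul hmf).aestronglyMeasurable
  have hmb : AEStronglyMeasurable (fun s => Real.sqrt s * f' s) μr :=
    (Real.continuous_sqrt.measurable.mul hmf').aestronglyMeasurable
  have haL2 : MemLp (fun s => Real.sqrt s * f s) 2 μr := by
    rw [memLp_two_iff_integrable_sq hma]; exact ha2
  have hbL2 : MemLp (fun s => Real.sqrt s * f' s) 2 μr := by
    rw [memLp_two_iff_integrable_sq hmb]; exact hb2
  -- product of the two L² functions is integrable
  have habprod : Integrable (fun s => (Real.sqrt s * f s) * (Real.sqrt s * f' s)) μr := by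
    have h1 : (1 : ENNReal) / 1 = 1 / 2 + 1 / 2 := by simp [ENNReal.inv_two_add_inv_two]
    have := (hbL2.smul haL2 : MemLp ((fun s => Real.sqrt s * f s) • (fun s => Real.sqrt s * f' s)) 1 μr)
    exact memLp_one_iff_integrable.mp this
  -- |f|*|f'| is integrable on Ioi r
  have hff' : IntegrableOn (fun s => |f s| * |f' s|) (Ioi r) := by
    refine (habprod.abs.const_mul (1 / r)).mono'
      ((hmf.abs.mul hmf'.abs).aestronglyMeasurable) ?_
    filter_upwards [ae_restrict_mem measurableSet_Ioi] with s hs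
    have hs0 : (0:ℝ) < s := hr.trans hs
    have hss : Real.sqrt s * Real.sqrt s = s := Real.mul_self_sqrt hs0.le
    rw [Real.norm_eq_abs, abs_of_nonneg (mul_nonneg (abs_nonneg _) (abs_nonneg _)),
      abs_mul, abs_mul, abs_mul, abs_of_nonneg (Real.sqrt_nonneg s)]
    have : |f s| * |f' s| * r ≤ |f s| * |f' s| * s :=
      mul_le_mul_of_nonneg_left hs.le (mul_nonneg (abs_nonneg _) (abs_nonneg _))
    have key : |f s| * |f' s| * r ≤ Real.sqrt s * |f s| * (Real.sqrt s * |f' s|) := by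
      rw [show Real.sqrt s * |f s| * (Real.sqrt s * |f' s|)
          = (Real.sqrt s * Real.sqrt s) * (|f s| * |f' s|) by ring, hss]
      linarith
    rw [div_mul_eq_mul_div, le_div_iff₀ hr]
    linarith
  -- Hölder inequality
  have hconj : Real.HolderConjugate 2 2 := Real.HolderConjugate.two_two
  have hof2 : ENNReal.ofReal (2:ℝ) = 2 := by
    rw [ENNReal.ofReal_ofNat]
  have hholder := integral_mul_norm_le_Lp_mul_Lq hconj
    (by rw [hof2]; exact haL2) (by rw [hof2]; exact hbL2)
  set A := ∫ s in Ioi (0:ℝ), s * f s ^ 2 with hA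
  set B := ∫ s in Ioi (0:ℝ), s * g s ^ 2 with hB
  have hA0 : 0 ≤ A := setIntegral_nonneg measurableSet_Ioi
    (fun s hs => mul_nonneg (le_of_lt hs) (sq_nonneg _))
  have hB0 : 0 ≤ B := setIntegral_nonneg measurableSet_Ioi
    (fun s hs => mul_nonneg (le_of_lt hs) (sq_nonneg _))
  have hIa : ∫ s, ‖Real.sqrt s * f s‖ ^ (2:ℝ) ∂μr ≤ A := by
    have e1 : (fun s => ‖Real.sqrt s * f s‖ ^ (2:ℝ)) =ᵐ[μr] (fun s => s * f s ^ 2) := by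
      filter_upwards [ae_restrict_mem measurableSet_Ioi] with s hs
      have hs0 : (0:ℝ) ≤ s := (hr.trans hs).le
      rw [Real.rpow_two, Real.norm_eq_abs, sq_abs, mul_pow, Real.sq_sqrt hs0]
    rw [integral_congr_ae e1]
    refine setIntegral_mono_set hAint ?_ (HasSubset.Subset.eventuallyLE hsub)
    filter_upwards [ae_restrict_mem measurableSet_Ioi] with s hs
    exact mul_nonneg (le_of_lt hs) (sq_nonneg _)
  have hIb : ∫ s, ‖Real.sqrt s * f' s‖ ^ (2:ℝ) ∂μr ≤ B := by
    have e1 : (fun s => ‖Real.sqrt s * f' s‖ ^ (2:ℝ)) =ᵐ[μr] (fun s => s * f' s ^ 2) := by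
      filter_upwards [ae_restrict_mem measurableSet_Ioi] with s hs
      have hs0 : (0:ℝ) ≤ s := (hr.trans hs).le
      rw [Real.rpow_two, Real.norm_eq_abs, sq_abs, mul_pow, Real.sq_sqrt hs0]
    rw [integral_congr_ae e1]
    have step1 : ∫ s in Ioi r, s * f' s ^ 2 ≤ ∫ s in Ioi r, s * g s ^ 2 := by
      refine integral_mono_ae (hBint.mono_set hsub) (hgint.mono_set hsub) ?_
      filter_upwards [ae_restrict_mem measurableSet_Ioi] with s hs
      have h1 : f' s ^ 2 ≤ g s ^ 2 := by
        nlinarith [hfg s, abs_nonneg (f' s), sq_abs (f' s)]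
      exact mul_le_mul_of_nonneg_left h1 (hr.trans hs).le
    refine step1.trans ?_
    refine setIntegral_mono_set hgint ?_ (HasSubset.Subset.eventuallyLE hsub)
    filter_upwards [ae_restrict_mem measurableSet_Ioi] with s hs
    exact mul_nonneg (le_of_lt hs) (sq_nonneg _)
  -- key integral bound
  have hInn : 0 ≤ ∫ s, ‖Real.sqrt s * f s‖ ^ (2:ℝ) ∂μr :=
    integral_nonneg fun s => Real.rpow_nonneg (norm_nonneg _) _
  have hInn' : 0 ≤ ∫ s, ‖Real.sqrt s * f' s‖ ^ (2:ℝ) ∂μr :=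
    integral_nonneg fun s => Real.rpow_nonneg (norm_nonneg _) _
  have hkey : ∫ s in Ioi r, |f s| * |f' s| ≤
      (1 / r) * (A ^ ((1:ℝ)/2) * B ^ ((1:ℝ)/2)) := by
    have hb1 : Integrable (fun s => (1/r) * (‖Real.sqrt s * f s‖ * ‖Real.sqrt s * f' s‖)) μr := by
      refine (habprod.abs.const_mul (1/r)).congr ?_
      filter_upwards with s
      rw [Real.norm_eq_abs, Real.norm_eq_abs, abs_mul]
    have step1 : ∫ s in Ioi r, |f s| * |f' s| ≤
        ∫ s, (1/r) * (‖Real.sqrt s * f s‖ * ‖Real.sqrt s * f' s‖) ∂μr := by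
      refine integral_mono_of_nonneg ?_ hb1 ?_
      · filter_upwards with s
        exact mul_nonneg (abs_nonneg _) (abs_nonneg _)
      · filter_upwards [ae_restrict_mem measurableSet_Ioi] with s hs
        have hs0 : (0:ℝ) < s := hr.trans hs
        have hss : Real.sqrt s * Real.sqrt s = s := Real.mul_self_sqrt hs0.le
        rw [Real.norm_eq_abs, Real.norm_eq_abs, abs_mul, abs_mul,
          abs_of_nonneg (Real.sqrt_nonneg s)]
        have key : |f s| * |f' s| * r ≤ Real.sqrt s * |f s| * (Real.sqrt s * |f' s|) := by
          rw [show Real.sqrt s * |f s| * (Real.sqrt s * |f' s|)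
              = (Real.sqrt s * Real.sqrt s) * (|f s| * |f' s|) by ring, hss]
          have h0 : 0 ≤ (s - r) * (|f s| * |f' s|) :=
            mul_nonneg (sub_nonneg.2 (le_of_lt hs)) (mul_nonneg (abs_nonneg _) (abs_nonneg _))
          nlinarith [h0]
        rw [div_mul_eq_mul_div, le_div_iff₀ hr]
        linarith
    refine step1.trans ?_
    rw [integral_const_mul]
    refine mul_le_mul_of_nonneg_left ?_ (by positivity)
    refine hholder.trans ?_
    have l1 : (∫ s, ‖Real.sqrt s * f s‖ ^ (2:ℝ) ∂μr) ^ ((1:ℝ)/2) ≤ A ^ ((1:ℝ)/2) :=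
      Real.rpow_le_rpow hInn hIa (by norm_num)
    have l2 : (∫ s, ‖Real.sqrt s * f' s‖ ^ (2:ℝ) ∂μr) ^ ((1:ℝ)/2) ≤ B ^ ((1:ℝ)/2) :=
      Real.rpow_le_rpow hInn' hIb (by norm_num)
    have := mul_le_mul l1 l2 (Real.rpow_nonneg hInn' _) (Real.rpow_nonneg hA0 _)
    convert this using 2 <;> norm_num
  -- FTC bound
  have hint2 : IntegrableOn (fun s => 2 * f s * f' s) (Ioi r) := by
    refine (hff'.const_mul 2).mono'
      (((measurable_const.mul hmf).mul hmf').aestronglyMeasurable) ?_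
    filter_upwards with s
    rw [Real.norm_eq_abs, abs_mul, abs_mul, abs_two, mul_assoc]
  have hftc : ∀ t, r ≤ t → f r ^ 2 ≤ f t ^ 2 + 2 * ∫ s in Ioi r, |f s| * |f' s| := by
    intro t ht
    have hderiv : ∀ s ∈ uIcc r t, HasDerivAt (fun y => f y ^ 2) (2 * f s * f' s) s := by
      intro s _
      have h := (hf' s).pow 2
      norm_num at h
      exact h
    have hii : IntervalIntegrable (fun s => 2 * f s * f' s) volume r t := by
      rw [intervalIntegrable_iff, uIoc_of_le ht]
      exact hint2.mono_set Ioc_subset_Ioi_self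
    have heq := intervalIntegral.integral_eq_sub_of_hasDerivAt hderiv hii
    have habs : |∫ s in r..t, 2 * f s * f' s| ≤ 2 * ∫ s in Ioi r, |f s| * |f' s| := by
      refine (intervalIntegral.abs_integral_le_integral_abs ht).trans ?_
      rw [intervalIntegral.integral_of_le ht]
      have : ∫ s in Ioc r t, |2 * f s * f' s| ≤ ∫ s in Ioi r, |2 * f s * f' s| := by
        refine setIntegral_mono_set hint2.abs ?_
          (HasSubset.Subset.eventuallyLE Ioc_subset_Ioi_self)
        filter_upwards with s using abs_nonneg _
      refine this.trans ?_
      rw [← integral_const_mul]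
      refine le_of_eq (integral_congr_ae ?_)
      filter_upwards with s
      rw [abs_mul, abs_mul, abs_two, mul_assoc]
    have h1 : f r ^ 2 = f t ^ 2 - ∫ s in r..t, 2 * f s * f' s := by
      rw [heq]; ring
    have h2 := neg_abs_le (∫ s in r..t, 2 * f s * f' s)
    linarith
  -- epsilon argument: f t ^ 2 gets arbitrarily small
  have heps : ∀ ε : ℝ, 0 < ε → ∃ t, r ≤ t ∧ f t ^ 2 < ε := by
    intro ε hε
    by_contra hcon
    push_neg at hcon
    set M := max r 1 with hM
    have hM0 : (0:ℝ) ≤ M := le_trans zero_le_one (le_max_right r 1)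
    have hintM : IntegrableOn (fun s => s * f s ^ 2) (Ioi M) :=
      hAint.mono_set (Ioi_subset_Ioi hM0)
    have hfin := hintM.measure_ge_lt_top hε
    have hsubset : Ioi M ⊆ {s : ℝ | ε ≤ s * f s ^ 2} := by
      intro s hs
      have hs1 : (1:ℝ) ≤ s := le_trans (le_max_right r 1) hs.le
      have hsr : r ≤ s := le_trans (le_max_left r 1) hs.le
      have hfs := hcon s hsr
      calc ε = 1 * ε := (one_mul ε).symm
        _ ≤ s * f s ^ 2 := mul_le_mul hs1 hfs hε.le (le_trans zero_le_one hs1)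
    have : (volume.restrict (Ioi M)) {s : ℝ | ε ≤ s * f s ^ 2} = volume (Ioi M) := by
      rw [Measure.restrict_apply' measurableSet_Ioi, inter_eq_self_of_subset_right hsubset]
    rw [this, Real.volume_Ioi] at hfin
    exact (lt_irrefl _ hfin)
  -- conclude
  have hfin : f r ^ 2 ≤ 2 * ∫ s in Ioi r, |f s| * |f' s| := by
    refine le_of_forall_pos_le_add ?_
    intro ε hε
    obtain ⟨t, ht, hft⟩ := heps ε hε
    have := hftc t ht
    linarith
  have : f r ^ 2 ≤ 2 * ((1 / r) * (A ^ ((1:ℝ)/2) * B ^ ((1:ℝ)/2))) := by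
    refine hfin.trans ?_
    linarith [hkey]
  rw [Real.sqrt_eq_rpow, Real.sqrt_eq_rpow]
  calc f r ^ 2 ≤ 2 * ((1 / r) * (A ^ ((1:ℝ)/2) * B ^ ((1:ℝ)/2))) := this
    _ = 2 / r * A ^ ((1:ℝ)/2) * B ^ ((1:ℝ)/2) := by ring

/-- Strauss radial decay inequality in 2D: there is `C > 0` such that every radially
symmetric `u ∈ H¹(ℝ²)` satisfies
`|u(x)| ≤ C|x|^{−1/2}‖u‖₂^{1/2}‖∇u‖₂^{1/2}` for `|x| ≥ R > 0`. -/
theorem strauss_radial_decay :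
    ∃ C > 0, ∀ (u : EuclideanSpace ℝ (Fin 2) → ℝ)
      (u' : EuclideanSpace ℝ (Fin 2) → EuclideanSpace ℝ (Fin 2) →L[ℝ] ℝ),
      (∀ x y : EuclideanSpace ℝ (Fin 2), ‖x‖ = ‖y‖ → u x = u y) →
      (∀ x, HasFDerivAt u (u' x) x) →
      Integrable (fun x => (u x) ^ 2) volume →
      Integrable (fun x => ‖u' x‖ ^ 2) volume →
      ∀ R : ℝ, 0 < R → ∀ x : EuclideanSpace ℝ (Fin 2), R ≤ ‖x‖ →
        |u x| ≤ C * ‖x‖ ^ (-(1 : ℝ) / 2)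
          * (∫ y, (u y) ^ 2) ^ ((1 : ℝ) / 4) * (∫ y, ‖u' y‖ ^ 2) ^ ((1 : ℝ) / 4) := by
  set vb : ℝ := (volume (ball (0:Fsp) 1)).toReal with hvbdef
  have hvb : 0 < vb := by
    refine ENNReal.toReal_pos (measure_ball_pos volume 0 one_pos).ne' measure_ball_lt_top.ne
  refine ⟨Real.sqrt (1 / vb), Real.sqrt_pos.2 (by positivity), ?_⟩
  intro u u' hrad hder hu2 hdu2 R hR x hx
  have hr : 0 < ‖x‖ := lt_of_lt_of_le hR hx
  set e : Fsp := EuclideanSpace.single (0 : Fin 2) (1:ℝ) with hedef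
  have he : ‖e‖ = 1 := by simp [hedef, EuclideanSpace.norm_single]
  have hnorm : ∀ s : ℝ, 0 ≤ s → ‖s • e‖ = s := by
    intro s hs
    rw [norm_smul, he, mul_one, Real.norm_eq_abs, abs_of_nonneg hs]
  set f : ℝ → ℝ := fun s => u (s • e) with hfdef
  set f' : ℝ → ℝ := fun s => u' (s • e) e with hf'def
  set g : ℝ → ℝ := fun s => ‖u' (s • e)‖ with hgdef
  have hux : ∀ z : Fsp, u z = f ‖z‖ := fun z =>
    hrad z (‖z‖ • e) (by rw [hnorm _ (norm_nonneg z)])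
  have hgx : ∀ z : Fsp, ‖u' z‖ = g ‖z‖ := fun z =>
    aux_deriv_radial u u' hrad hder z (‖z‖ • e) (by rw [hnorm _ (norm_nonneg z)])
  have hfd : ∀ s : ℝ, HasDerivAt f (f' s) s := by
    intro s
    have h1 : HasDerivAt (fun t : ℝ => t • e) e s := by
      simpa using (hasDerivAt_id s).smul_const e
    exact (hder (s • e)).comp_hasDerivAt s h1
  have hfg : ∀ s : ℝ, |f' s| ≤ g s := by
    intro s
    have := (u' (s • e)).le_opNorm e
    rw [he, mul_one] at this
    simpa [hf'def, hgdef] using this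
  have hu'fd : ∀ z : Fsp, u' z = fderiv ℝ u z := fun z => ((hder z).fderiv).symm
  have hsm : Measurable fun s : ℝ => s • e :=
    (continuous_id.smul continuous_const).measurable
  have hmf' : Measurable f' := by
    have heq2 : f' = (fun z : Fsp => fderiv ℝ u z e) ∘ (fun s : ℝ => s • e) := by
      funext s; simp [hf'def, Function.comp, hu'fd]
    rw [heq2]
    exact (measurable_fderiv_apply_const ℝ u e).comp hsm
  have hmg : Measurable g := by
    have heq2 : g = (fun z : Fsp => ‖fderiv ℝ u z‖) ∘ (fun s : ℝ => s • e) := by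
      funext s; simp [hgdef, Function.comp, hu'fd]
    rw [heq2]
    exact ((measurable_fderiv ℝ u).norm).comp hsm
  -- transfer integrals to 1D
  have hueq : (fun z : Fsp => u z ^ 2) = fun z => f ‖z‖ ^ 2 := funext fun z => by rw [hux z]
  have hgeq : (fun z : Fsp => ‖u' z‖ ^ 2) = fun z => g ‖z‖ ^ 2 := funext fun z => by rw [hgx z]
  have hmf : Measurable f := by
    have hc : Continuous f := by
      rw [continuous_iff_continuousAt]; exact fun s => (hfd s).continuousAt
    exact hc.measurable
  have hAint : IntegrableOn (fun s => s * f s ^ 2) (Ioi (0:ℝ)) := by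
    refine aux_integrableOn (fun s => f s ^ 2) (hmf.pow_const 2) ?_
    rw [← hueq]; exact hu2
  have hBint : IntegrableOn (fun s => s * g s ^ 2) (Ioi (0:ℝ)) := by
    refine aux_integrableOn (fun s => g s ^ 2) (hmg.pow_const 2) ?_
    rw [← hgeq]; exact hdu2
  have hAeq : ∫ z : Fsp, u z ^ 2 = (2 * vb) * ∫ s in Ioi (0:ℝ), s * f s ^ 2 := by
    rw [hueq]; exact aux_integral_eq (fun s => f s ^ 2)
  have hBeq : ∫ z : Fsp, ‖u' z‖ ^ 2 = (2 * vb) * ∫ s in Ioi (0:ℝ), s * g s ^ 2 := by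
    rw [hgeq]; exact aux_integral_eq (fun s => g s ^ 2)
  set A := ∫ z : Fsp, u z ^ 2 with hAdef
  set B := ∫ z : Fsp, ‖u' z‖ ^ 2 with hBdef
  have hA0 : 0 ≤ A := integral_nonneg fun z => sq_nonneg _
  have hB0 : 0 ≤ B := integral_nonneg fun z => sq_nonneg _
  have hA'eq : ∫ s in Ioi (0:ℝ), s * f s ^ 2 = A / (2 * vb) := by
    rw [hAeq]; field_simp
  have hB'eq : ∫ s in Ioi (0:ℝ), s * g s ^ 2 = B / (2 * vb) := by
    rw [hBeq]; field_simp
  have h1d := aux_oneD f f' g hfd hmf' hmg hfg hAint hBint ‖x‖ hr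
  rw [hA'eq, hB'eq] at h1d
  -- now pure arithmetic
  have hux2 : |u x| = Real.sqrt (f ‖x‖ ^ 2) := by
    rw [Real.sqrt_sq_eq_abs, hux x]
  have key : |u x| ≤ Real.sqrt ((2 / ‖x‖) * Real.sqrt (A / (2*vb)) * Real.sqrt (B / (2*vb))) := by
    rw [hux2]; exact Real.sqrt_le_sqrt h1d
  refine key.trans (le_of_eq ?_)
  have e1 : (2 / ‖x‖) * Real.sqrt (A / (2*vb)) * Real.sqrt (B / (2*vb))
      = (1 / vb) * ((1 / ‖x‖) * (Real.sqrt A * Real.sqrt B)) := by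
    have h2vb : Real.sqrt (2*vb) * Real.sqrt (2*vb) = 2*vb := Real.mul_self_sqrt (by positivity)
    rw [Real.sqrt_div hA0, Real.sqrt_div hB0]
    field_simp
    ring_nf
    rw [Real.sq_sqrt (by linarith : (0:ℝ) ≤ vb * 2)]
    ring
  rw [e1]
  rw [Real.sqrt_mul (by positivity : (0:ℝ) ≤ 1/vb),
    Real.sqrt_mul (by positivity : (0:ℝ) ≤ 1/‖x‖),
    Real.sqrt_mul (Real.sqrt_nonneg A)]
  have e3 : Real.sqrt (1 / ‖x‖) = ‖x‖ ^ (-(1:ℝ)/2) := by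
    rw [one_div, Real.sqrt_inv, Real.sqrt_eq_rpow,
      show (-(1:ℝ)/2) = -((1:ℝ)/2) by norm_num, Real.rpow_neg hr.le]
  have e4 : Real.sqrt (Real.sqrt A) = A ^ ((1:ℝ)/4) := by
    rw [Real.sqrt_eq_rpow, Real.sqrt_eq_rpow, ← Real.rpow_mul hA0]
    norm_num
  have e5 : Real.sqrt (Real.sqrt B) = B ^ ((1:ℝ)/4) := by
    rw [Real.sqrt_eq_rpow, Real.sqrt_eq_rpow, ← Real.rpow_mul hB0]
    norm_num
  rw [e3, e4, e5]
  ring
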